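/- Iteratively applying linear-time k-selection to remove the largest remaining layer constructs a layer-ordered heap of rank α > 1 on n elements in O(n) total time: the total work is bounded by c·Σ_u (remaining size before extracting layer u) = c·Σ_u Σ_{w≤u} |X^(w)| ∈ O(n) when layer sizes grow geometrically with ratio α. -/

import Mathlib

/-- LOHification by iterated linear-time selection runs in O(n)
time: with geometric layer sizes |X^(w)| = α^(w-1) (w = 1..m) and linear-time
selection costing c·m on m elements, the total work
c·Σ_u Σ_{w ≤ u} |X^(w)| is at most a constant C (depending only on α) times
c·n, where n = Σ_w |X^(w)| is the total number of elements. -/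
theorem lohify_linear_time (α : ℝ) (hα : 1 < α) :
    ∃ C : ℝ, 0 < C ∧ ∀ c : ℝ, 0 ≤ c → ∀ m : ℕ,
      c * ∑ u ∈ Finset.range m, (∑ w ∈ Finset.range (u + 1), α ^ w) ≤
        C * (c * ∑ w ∈ Finset.range m, α ^ w) := by
  have hα1 : 0 < α - 1 := by linarith
  have hα0 : 0 < α := by linarith
  refine ⟨α / (α - 1), div_pos hα0 hα1, fun c hc m => ?_⟩
  rw [mul_comm (α / (α - 1)), mul_assoc]
  apply mul_le_mul_of_nonneg_left _ hc
  rw [mul_comm, Finset.mul_sum]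
  apply Finset.sum_le_sum
  intro u _
  rw [geom_sum_eq (by linarith : α ≠ 1)]
  rw [div_mul_eq_mul_div, div_le_div_iff₀ hα1 hα1]
  have : α ^ (u+1) - 1 ≤ α ^ (u+1) := by linarith
  calc (α ^ (u + 1) - 1) * (α - 1) ≤ α ^ (u+1) * (α-1) := by nlinarith
    _ = α * α ^ u * (α - 1) := by ring
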